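/- Let G be a finite simple graph with no isolated vertices and with maximum degree at most k, for a natural number k. If G has a vertex cover of size at most k, then G has at most k² + k vertices and at most k² edges. -/
import Mathlib


/-- `X` is a vertex cover of `G`: every edge has at least one endpoint in `X`. -/
def IsVC {V : Type*} (G : SimpleGraph V) (X : Set V) : Prop :=
  ∀ ⦃u w : V⦄, G.Adj u w → u ∈ X ∨ w ∈ X

/-- `G` has a vertex cover of size at most `k`. -/
def HasVC {V : Type*} (G : SimpleGraph V) (k : ℕ) : Prop :=
  ∃ X : Set V, IsVC G X ∧ X.ncard ≤ k

theorem stmt_2 {V : Type*} [Fintype V] (G : SimpleGraph V) [DecidableRel G.Adj]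
    (k : ℕ)
    (hiso : ∀ v : V, ∃ w, G.Adj v w)
    (hdeg : ∀ v : V, G.degree v ≤ k)
    (h : HasVC G k) :
    Fintype.card V ≤ k ^ 2 + k ∧ G.edgeFinset.card ≤ k ^ 2 := by
  classical
  obtain ⟨X, hX, hXcard⟩ := h
  set Xf : Finset V := X.toFinset with hXf
  have hXfcard : Xf.card ≤ k := by
    rwa [hXf, ← Set.ncard_eq_toFinset_card']
  constructor
  · have hsub : (Finset.univ : Finset V) ⊆
        Xf.biUnion (fun x => G.neighborFinset x) ∪ Xf := by
      intro v _
      by_cases hv : v ∈ X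
      · exact Finset.mem_union_right _ (Set.mem_toFinset.mpr hv)
      · obtain ⟨w, hw⟩ := hiso v
        have hwX : w ∈ X := (hX hw).resolve_left hv
        refine Finset.mem_union_left _ (Finset.mem_biUnion.mpr ⟨w, Set.mem_toFinset.mpr hwX, ?_⟩)
        exact (SimpleGraph.mem_neighborFinset G w v).mpr hw.symm
    calc Fintype.card V = (Finset.univ : Finset V).card := rfl
      _ ≤ (Xf.biUnion (fun x => G.neighborFinset x) ∪ Xf).card :=
          Finset.card_le_card hsub
      _ ≤ (Xf.biUnion (fun x => G.neighborFinset x)).card + Xf.card :=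
          Finset.card_union_le _ _
      _ ≤ (∑ x ∈ Xf, (G.neighborFinset x).card) + Xf.card :=
          Nat.add_le_add_right (Finset.card_biUnion_le) _
      _ ≤ (∑ _x ∈ Xf, k) + k := by
          refine Nat.add_le_add ?_ hXfcard
          exact Finset.sum_le_sum fun x _ => by
            rw [SimpleGraph.card_neighborFinset_eq_degree]; exact hdeg x
      _ ≤ k * k + k := by
          rw [Finset.sum_const, smul_eq_mul]
          exact Nat.add_le_add_right (Nat.mul_le_mul_right k hXfcard) k
      _ = k ^ 2 + k := by ring
  · have hsub : G.edgeFinset ⊆ Xf.biUnion (fun x => G.incidenceFinset x) := by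
      intro e he
      rw [SimpleGraph.mem_edgeFinset] at he
      induction e using Sym2.ind with
      | _ u w =>
        have hadj : G.Adj u w := he
        rcases hX hadj with hu | hu
        · exact Finset.mem_biUnion.mpr ⟨u, Set.mem_toFinset.mpr hu,
            (SimpleGraph.mem_incidenceFinset (G := G) (v := u) _).mpr ⟨hadj, Sym2.mem_mk_left u w⟩⟩
        · exact Finset.mem_biUnion.mpr ⟨w, Set.mem_toFinset.mpr hu,
            (SimpleGraph.mem_incidenceFinset (G := G) (v := w) _).mpr ⟨hadj, Sym2.mem_mk_right u w⟩⟩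
    calc G.edgeFinset.card ≤ (Xf.biUnion (fun x => G.incidenceFinset x)).card :=
          Finset.card_le_card hsub
      _ ≤ ∑ x ∈ Xf, (G.incidenceFinset x).card := Finset.card_biUnion_le
      _ ≤ ∑ _x ∈ Xf, k := Finset.sum_le_sum fun x _ => by
          rw [SimpleGraph.card_incidenceFinset_eq_degree]; exact hdeg x
      _ ≤ k * k := by
          rw [Finset.sum_const, smul_eq_mul]
          exact Nat.mul_le_mul_right k hXfcard
      _ = k ^ 2 := by ring
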